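/- There exists an infinite phylogenetic network G such that for every k ≥ 0 the restriction [G]_k satisfies B₂([G]_k) = 1 if k is odd and B₂([G]_k) = 0 if k is even; in particular, the sequence (B₂([G]_k))_{k≥0} does not converge. -/

import Mathlib

/-!
There is an infinite phylogenetic network `G` whose height-`k` restrictions `[G]_k`
satisfy `B₂([G]_k) = 1` for odd `k` and `B₂([G]_k) = 0` for even `k`; in particular
`B₂([G]_k)` does not converge (Figure "figCounterExDefB2" of the paper).
-/

open Finset

namespace GalledB2

/- Finite phylogenetic networks and their B₂ index. -/

structure Net (V : Type*) where
  adj : V → V → ℕ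
  root : V

variable {V : Type*}

section Finite

variable [Fintype V]

def outDeg (G : Net V) (v : V) : ℕ := ∑ u, G.adj v u

def IsLeaf (G : Net V) (v : V) : Prop := outDeg G v = 0

open Classical in
noncomputable def pvisit (G : Net V) (v : V) : ℝ :=
  ∑ j ∈ Finset.range (Fintype.card V), ∑ f : Fin (j + 1) → V,
    if f 0 = G.root ∧ f (Fin.last j) = v then
      ∏ i : Fin j, (G.adj (f i.castSucc) (f i.succ) : ℝ) / (outDeg G (f i.castSucc) : ℝ)
    else 0

open Classical in
noncomputable def B2 (G : Net V) : ℝ :=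
  - ∑ v ∈ Finset.univ.filter (fun v => IsLeaf G v),
      pvisit G v * Real.logb 2 (pvisit G v)

end Finite

/- Infinite phylogenetic networks, heights, restrictions. -/

structure INet (V : Type*) where
  adj : V → V → Prop
  root : V

/-- `G` is a phylogenetic network: a locally finite DAG in which the root has
in-degree 0 and every vertex is reachable from the root. -/
def IsPhyloNet (G : INet V) : Prop :=
  (∀ v, {u | G.adj v u}.Finite ∧ {u | G.adj u v}.Finite) ∧
  (∀ v, ¬ Relation.TransGen G.adj v v) ∧
  (∀ u, ¬ G.adj u G.root) ∧
  (∀ v, Relation.ReflTransGen G.adj G.root v)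

/-- The height of a vertex: the minimal length of a directed path from the root. -/
noncomputable def height (G : INet V) (v : V) : ℕ :=
  sInf {n | ∃ f : ℕ → V, f 0 = G.root ∧ f n = v ∧ ∀ i < n, G.adj (f i) (f (i + 1))}

open Classical in
/-- The restriction `[G]_k` of `G` to its vertices of height at most `k`, as a finite
phylogenetic network (all edge multiplicities are 0 or 1 since `G` is a digraph). -/
noncomputable def restNet (G : INet V) (k : ℕ) : Net {v : V // height G v ≤ k} where
  adj u v := if G.adj u.1 v.1 then 1 else 0
  root := ⟨G.root,
    le_trans
      (Nat.sInf_le ⟨fun _ => G.root, rfl, rfl, fun i hi => absurd hi (Nat.not_lt_zero i)⟩)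
      (Nat.zero_le k)⟩

/-! ### Generic path-weight machinery -/

section PathWeight

variable [Fintype V]

open Classical in
noncomputable def wgt (G : Net V) (u v : V) : ℝ := (G.adj u v : ℝ) / (outDeg G u : ℝ)

open Classical in
noncomputable def Ppath (G : Net V) (j : ℕ) (v : V) : ℝ :=
  ∑ f : Fin (j + 1) → V,
    if f 0 = G.root ∧ f (Fin.last j) = v then
      ∏ i : Fin j, wgt G (f i.castSucc) (f i.succ)
    else 0

lemma pvisit_eq_sum_Ppath (G : Net V) (v : V) :
    pvisit G v = ∑ j ∈ Finset.range (Fintype.card V), Ppath G j v := rfl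

open Classical in
lemma Ppath_zero (G : Net V) (v : V) :
    Ppath G 0 v = if G.root = v then 1 else 0 := by
  classical
  rw [Ppath]
  rw [Fintype.sum_equiv (Equiv.funUnique (Fin 1) V)
    _ (fun x => if x = G.root ∧ x = v then 1 else 0) (fun f => by
      simp [Equiv.funUnique, show Fin.last 0 = 0 from rfl])]
  by_cases h : G.root = v
  · subst h; simp
  · rw [if_neg h]
    apply Finset.sum_eq_zero
    intro x _
    rw [if_neg]
    rintro ⟨h1, h2⟩
    exact h (h1 ▸ h2)

open Classical in
lemma Ppath_succ (G : Net V) (j : ℕ) (v : V) :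
    Ppath G (j + 1) v = ∑ u, Ppath G j u * wgt G u v := by
  classical
  have key : Ppath G (j + 1) v =
      ∑ p : (Fin (j + 1) → V) × V,
        if p.1 0 = G.root ∧ p.2 = v then
          (∏ i : Fin j, wgt G (p.1 i.castSucc) (p.1 i.succ)) * wgt G (p.1 (Fin.last j)) p.2
        else 0 := by
    rw [Ppath]
    refine (Fintype.sum_equiv (Equiv.ofBijective (fun p : (Fin (j+1) → V) × V => Fin.snoc p.1 p.2)
      ⟨?_, ?_⟩) _ _ ?_).symm
    · intro p q h
      have h1 : p.1 = q.1 := by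
        funext i
        have := congrFun h i.castSucc
        simpa using this
      have h2 : p.2 = q.2 := by
        have := congrFun h (Fin.last (j+1))
        simpa using this
      exact Prod.ext h1 h2
    · intro f
      exact ⟨(fun i => f i.castSucc, f (Fin.last _)), by
        funext i
        refine Fin.lastCases ?_ ?_ i
        · simp
        · intro i; simp⟩
    · intro p
      erw [Equiv.ofBijective_apply]
      have h0 : (Fin.snoc p.1 p.2 : Fin (j+2) → V) 0 = p.1 0 := by
        have : (0 : Fin (j+2)) = (0 : Fin (j+1)).castSucc := by simp
        rw [this, Fin.snoc_castSucc]
      have hlast : (Fin.snoc p.1 p.2 : Fin (j+2) → V) (Fin.last (j+1)) = p.2 :=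
        Fin.snoc_last _ _
      rw [h0, hlast]
      congr 1
      rw [Fin.prod_univ_castSucc]
      congr 1
      · apply Finset.prod_congr rfl
        intro i _
        rw [Fin.succ_castSucc, Fin.snoc_castSucc, Fin.snoc_castSucc]
      · rw [Fin.succ_last, Fin.snoc_castSucc, Fin.snoc_last]
  rw [key, Fintype.sum_prod_type]
  have hL : ∀ g : Fin (j+1) → V,
      (∑ x : V, if g 0 = G.root ∧ x = v then
          (∏ i : Fin j, wgt G (g i.castSucc) (g i.succ)) * wgt G (g (Fin.last j)) x else 0)
      = if g 0 = G.root then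
          (∏ i : Fin j, wgt G (g i.castSucc) (g i.succ)) * wgt G (g (Fin.last j)) v else 0 := by
    intro g
    by_cases hg : g 0 = G.root
    · simp only [hg, true_and, if_pos]
      rw [Finset.sum_ite_eq' Finset.univ v]
      simp
    · simp [hg]
  simp only [hL]
  have hR : ∀ u : V, Ppath G j u * wgt G u v
      = ∑ g : Fin (j+1) → V, (if g 0 = G.root ∧ g (Fin.last j) = u then
          (∏ i : Fin j, wgt G (g i.castSucc) (g i.succ)) * wgt G u v else 0) := by
    intro u
    rw [Ppath, Finset.sum_mul]
    apply Finset.sum_congr rfl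
    intro g _
    rw [ite_mul, zero_mul]
  simp only [hR]
  rw [Finset.sum_comm]
  apply Finset.sum_congr rfl
  intro g _
  by_cases hg : g 0 = G.root
  · simp only [hg, true_and]
    rw [Finset.sum_ite_eq Finset.univ (g (Fin.last j))]
    simp
  · simp [hg]

end PathWeight


/-! ### The concrete oscillating network -/

def lvl (n : ℕ) : ℕ := 2 * (n / 3) + (n % 3 + 1) / 2

def Adj (n m : ℕ) : Prop :=
  (n % 3 = 0 ∧ (m = n + 1 ∨ m = n + 2)) ∨ (n % 3 = 1 ∧ m = n + 2) ∨ (n % 3 = 2 ∧ m = n + 1)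

def Gex : INet ℕ := ⟨Adj, 0⟩

lemma adj_lt {n m : ℕ} (h : Adj n m) : n < m := by unfold Adj at h; omega

lemma adj_lvl {n m : ℕ} (h : Adj n m) : lvl m = lvl n + 1 := by
  unfold Adj at h; unfold lvl; omega

lemma lvl_zero : lvl 0 = 0 := rfl

lemma path_lvl {f : ℕ → ℕ} (h0 : f 0 = 0) {j : ℕ} (h : ∀ i < j, Adj (f i) (f (i + 1))) :
    lvl (f j) = j := by
  induction j with
  | zero => rw [h0]; rfl
  | succ j ih =>
    rw [adj_lvl (h j (Nat.lt_succ_self j)), ih (fun i hi => h i (by omega))]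

lemma exists_path : ∀ n, ∃ f : ℕ → ℕ, f 0 = 0 ∧ f (lvl n) = n ∧
    ∀ i < lvl n, Adj (f i) (f (i + 1)) := by
  intro n
  induction n using Nat.strong_induction_on with
  | _ n ih =>
    rcases Nat.eq_zero_or_pos n with h0 | hpos
    · subst h0
      exact ⟨fun _ => 0, rfl, rfl, fun i hi => absurd hi (by simp [lvl_zero])⟩
    · obtain ⟨p, hlt, hadj, hlvlp⟩ : ∃ p, p < n ∧ Adj p n ∧ lvl p + 1 = lvl n := by
        by_cases h1 : n % 3 = 1
        · exact ⟨n - 1, by omega, Or.inl ⟨by omega, Or.inl (by omega)⟩, by unfold lvl; omega⟩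
        by_cases h2 : n % 3 = 2
        · exact ⟨n - 2, by omega, Or.inl ⟨by omega, Or.inr (by omega)⟩, by unfold lvl; omega⟩
        · exact ⟨n - 2, by omega, Or.inr (Or.inl ⟨by omega, by omega⟩), by unfold lvl; omega⟩
      obtain ⟨f, hf0, hfp, hstep⟩ := ih p hlt
      refine ⟨fun i => if i ≤ lvl p then f i else n, by simp [hf0], by simp [← hlvlp], ?_⟩
      intro i hi
      show Adj (if i ≤ lvl p then f i else n) (if i + 1 ≤ lvl p then f (i + 1) else n)
      rcases Nat.lt_or_ge i (lvl p) with hip | hip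
      · rw [if_pos (le_of_lt hip), if_pos (by omega : i + 1 ≤ lvl p)]
        exact hstep i hip
      · rw [if_pos (by omega : i ≤ lvl p), if_neg (by omega : ¬ i + 1 ≤ lvl p),
          (by omega : i = lvl p), hfp]
        exact hadj

lemma height_eq (n : ℕ) : height Gex n = lvl n := by
  have hmem : lvl n ∈ {j | ∃ f : ℕ → ℕ, f 0 = Gex.root ∧ f j = n ∧
      ∀ i < j, Gex.adj (f i) (f (i + 1))} := exists_path n
  have hne : {j | ∃ f : ℕ → ℕ, f 0 = Gex.root ∧ f j = n ∧
      ∀ i < j, Gex.adj (f i) (f (i + 1))}.Nonempty := ⟨lvl n, hmem⟩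
  have hsm := Nat.sInf_mem hne
  obtain ⟨f, hf0, hfn, hstep⟩ := hsm
  have := path_lvl hf0 hstep
  rw [hfn] at this
  exact this.symm

lemma isPhyloNet_Gex : IsPhyloNet Gex := by
  refine ⟨?_, ?_, ?_, ?_⟩
  · intro v
    constructor
    · apply (Set.finite_Icc (v + 1) (v + 2)).subset
      intro u hu
      simp only [Set.mem_Icc]
      have hu' : Adj v u := hu
      unfold Adj at hu'; omega
    · apply (Set.finite_Iio v).subset
      intro u hu
      exact adj_lt hu
  · intro v h
    have : ∀ a b : ℕ, Relation.TransGen Gex.adj a b → a < b := by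
      intro a b hab
      induction hab with
      | single h => exact adj_lt h
      | tail _ h ih => exact ih.trans (adj_lt h)
    exact absurd (this v v h) (lt_irrefl v)
  · intro u h
    exact Nat.not_lt_zero u (adj_lt (show Adj u 0 from h))
  · intro n
    obtain ⟨f, h0, hn, hs⟩ := exists_path n
    have H : ∀ j, (∀ i < j, Adj (f i) (f (i + 1))) →
        Relation.ReflTransGen Adj (f 0) (f j) := by
      intro j
      induction j with
      | zero => intro _; exact .refl
      | succ j ih =>
        intro h
        exact (ih fun i hi => h i (by omega)).tail (h j (by omega))
    have := H (lvl n) hs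
    rw [h0, hn] at this
    exact this

/-! ### The restriction of height `k` -/

section Rest

set_option linter.unusedSectionVars false

variable {k : ℕ} [Fintype {v : ℕ // height Gex v ≤ k}]

local notation "Sk" => {v : ℕ // height Gex v ≤ k}

lemma val_mk {n : ℕ} (h : height Gex n ≤ k) : ((⟨n, h⟩ : Sk) : ℕ) = n := rfl

lemma mem_lvl (v : Sk) : lvl v.1 ≤ k := by
  have := v.2; rwa [height_eq] at this

lemma mk_mem {n : ℕ} (h : lvl n ≤ k) : height Gex n ≤ k := by rwa [height_eq]

lemma card_ge : k + 1 ≤ Fintype.card Sk := by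
  have h : ∀ i : Fin (k + 1), height Gex (3 * (i.1 / 2) + i.1 % 2) ≤ k := by
    intro i
    rw [height_eq]
    have : lvl (3 * (i.1 / 2) + i.1 % 2) = i.1 := by unfold lvl; omega
    rw [this]
    omega
  have := Fintype.card_le_of_injective (fun i : Fin (k + 1) =>
    (⟨3 * (i.1 / 2) + i.1 % 2, h i⟩ : Sk)) ?_
  · simpa using this
  · intro a b hab
    rw [Subtype.mk.injEq] at hab
    exact Fin.ext (by omega)

lemma restNet_adj_pos {u v : Sk} (h : Adj u.1 v.1) : (restNet Gex k).adj u v = 1 := by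
  simp only [restNet]
  exact if_pos h

lemma restNet_adj_neg {u v : Sk} (h : ¬ Adj u.1 v.1) : (restNet Gex k).adj u v = 0 := by
  simp only [restNet]
  exact if_neg h

lemma outDeg_of_lt {u : Sk} (hu : lvl u.1 < k) :
    outDeg (restNet Gex k) u = if u.1 % 3 = 0 then 2 else 1 := by
  classical
  by_cases h0 : u.1 % 3 = 0
  · have hc1 : height Gex (u.1 + 1) ≤ k := by
      rw [height_eq]
      have := adj_lvl (show Adj u.1 (u.1 + 1) from Or.inl ⟨h0, Or.inl rfl⟩)
      omega
    have hc2 : height Gex (u.1 + 2) ≤ k := by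
      rw [height_eq]
      have := adj_lvl (show Adj u.1 (u.1 + 2) from Or.inl ⟨h0, Or.inr rfl⟩)
      omega
    rw [if_pos h0]
    unfold outDeg
    have : ∀ v : Sk, (restNet Gex k).adj u v =
        (if v = ⟨u.1 + 1, hc1⟩ then 1 else 0) + (if v = ⟨u.1 + 2, hc2⟩ then 1 else 0) := by
      intro v
      by_cases hadj : Adj u.1 v.1
      · rw [restNet_adj_pos hadj]
        have hv : v.1 = u.1 + 1 ∨ v.1 = u.1 + 2 := by unfold Adj at hadj; omega
        rcases hv with hv | hv
        · rw [if_pos (Subtype.ext hv), if_neg (by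
            intro hc; rw [Subtype.mk.injEq] at hc; omega)]
        · rw [if_neg (by
            intro hc; rw [Subtype.mk.injEq] at hc; omega), if_pos (Subtype.ext hv)]
      · have hv1 : v ≠ ⟨u.1 + 1, hc1⟩ := by
          intro hc
          exact hadj (by rw [hc]; exact Or.inl ⟨h0, Or.inl rfl⟩)
        have hv2 : v ≠ ⟨u.1 + 2, hc2⟩ := by
          intro hc
          exact hadj (by rw [hc]; exact Or.inl ⟨h0, Or.inr rfl⟩)
        rw [restNet_adj_neg hadj, if_neg hv1, if_neg hv2]
    rw [Finset.sum_congr rfl (fun v _ => this v), Finset.sum_add_distrib,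
      Finset.sum_ite_eq' Finset.univ, Finset.sum_ite_eq' Finset.univ]
    simp
  · -- single child
    have hadj0 : Adj u.1 (if u.1 % 3 = 1 then u.1 + 2 else u.1 + 1) := by
      by_cases h1 : u.1 % 3 = 1
      · rw [if_pos h1]; exact Or.inr (Or.inl ⟨h1, rfl⟩)
      · rw [if_neg h1]; exact Or.inr (Or.inr ⟨by omega, rfl⟩)
    have hc : height Gex (if u.1 % 3 = 1 then u.1 + 2 else u.1 + 1) ≤ k := by
      rw [height_eq]
      have := adj_lvl hadj0
      omega
    rw [if_neg h0]
    unfold outDeg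
    have : ∀ v : Sk, (restNet Gex k).adj u v =
        (if v = ⟨if u.1 % 3 = 1 then u.1 + 2 else u.1 + 1, hc⟩ then 1 else 0) := by
      intro v
      by_cases hadj : Adj u.1 v.1
      · rw [restNet_adj_pos hadj]
        have hv : v.1 = if u.1 % 3 = 1 then u.1 + 2 else u.1 + 1 := by
          unfold Adj at hadj
          split <;> omega
        rw [if_pos (Subtype.ext hv)]
      · rw [restNet_adj_neg hadj, if_neg]
        intro hcx
        exact hadj (by rw [hcx]; exact hadj0)
    rw [Finset.sum_congr rfl (fun v _ => this v), Finset.sum_ite_eq' Finset.univ]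
    simp

lemma outDeg_of_eq {u : Sk} (hu : lvl u.1 = k) : outDeg (restNet Gex k) u = 0 := by
  unfold outDeg
  apply Finset.sum_eq_zero
  intro v _
  by_cases hadj : Adj u.1 v.1
  · have h1 := adj_lvl hadj
    have h2 := mem_lvl v
    omega
  · exact restNet_adj_neg hadj

lemma isLeaf_iff (v : Sk) : IsLeaf (restNet Gex k) v ↔ lvl v.1 = k := by
  constructor
  · intro h
    by_contra hne
    have hlt : lvl v.1 < k := lt_of_le_of_ne (mem_lvl v) hne
    have := outDeg_of_lt hlt
    unfold IsLeaf at h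
    rw [h] at this
    split at this <;> omega
  · intro h
    exact outDeg_of_eq h


lemma Ppath_ne : ∀ (j : ℕ) (v : Sk), lvl v.1 ≠ j → Ppath (restNet Gex k) j v = 0 := by
  intro j
  induction j with
  | zero =>
    intro v hv
    rw [Ppath_zero, if_neg]
    intro he
    apply hv
    have : v.1 = 0 := by rw [← he]; rfl
    rw [this]; rfl
  | succ j ih =>
    intro v hv
    rw [Ppath_succ]
    apply Finset.sum_eq_zero
    intro u _
    by_cases hlu : lvl u.1 = j
    · have hna : ¬ Adj u.1 v.1 := by
        intro hadj
        exact hv (by rw [adj_lvl hadj, hlu])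
      have : wgt (restNet Gex k) u v = 0 := by
        unfold wgt
        rw [restNet_adj_neg hna]
        simp
      rw [this, mul_zero]
    · rw [ih u hlu, zero_mul]

lemma pvisit_eq_Ppath (v : Sk) :
    pvisit (restNet Gex k) v = Ppath (restNet Gex k) (lvl v.1) v := by
  rw [pvisit_eq_sum_Ppath]
  apply Finset.sum_eq_single_of_mem
  · rw [Finset.mem_range]
    have h1 := mem_lvl v
    have h2 := card_ge (k := k)
    omega
  · intro j _ hj
    exact Ppath_ne j v (Ne.symm hj)

lemma wgt_eq {u v : Sk} (hadj : Adj u.1 v.1) (hu : lvl u.1 < k) :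
    wgt (restNet Gex k) u v = if u.1 % 3 = 0 then (2 : ℝ)⁻¹ else 1 := by
  unfold wgt
  rw [restNet_adj_pos hadj, outDeg_of_lt hu]
  split <;> norm_num

lemma Ppath_val : ∀ n, ∀ (hn : height Gex n ≤ k),
    Ppath (restNet Gex k) (lvl n) ⟨n, hn⟩ = if n % 3 = 0 then 1 else (2 : ℝ)⁻¹ := by
  intro n
  induction n using Nat.strong_induction_on with
  | _ n ih =>
    intro hn
    have hlvln : lvl n ≤ k := by rwa [height_eq] at hn
    rcases Nat.eq_zero_or_pos n with h0 | hpos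
    · subst h0
      rw [show lvl 0 = 0 from rfl, Ppath_zero,
        if_pos (show (restNet Gex k).root = ⟨0, hn⟩ from Subtype.ext rfl)]
      rw [if_pos rfl]
    · by_cases h3 : n % 3 = 0
      · -- two predecessors p1 = n-2, p2 = n-1
        have hadj1 : Adj (n - 2) n := Or.inr (Or.inl ⟨by omega, by omega⟩)
        have hadj2 : Adj (n - 1) n := Or.inr (Or.inr ⟨by omega, by omega⟩)
        have hlvl1 : lvl n = lvl (n - 2) + 1 := adj_lvl hadj1
        have hlvl2 : lvl (n - 1) = lvl (n - 2) := by unfold lvl; omega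
        have h1m : height Gex (n - 2) ≤ k := mk_mem (by omega)
        have h2m : height Gex (n - 1) ≤ k := mk_mem (by rw [hlvl2]; omega)
        have hne : (⟨n - 2, h1m⟩ : Sk) ≠ ⟨n - 1, h2m⟩ := by
          intro hc
          rw [Subtype.mk.injEq] at hc
          omega
        rw [hlvl1, Ppath_succ]
        have hout : ∀ u : Sk, u ∈ Finset.univ →
            u ∉ ({⟨n - 2, h1m⟩, ⟨n - 1, h2m⟩} : Finset Sk) →
            Ppath (restNet Gex k) (lvl (n - 2)) u * wgt (restNet Gex k) u ⟨n, hn⟩ = 0 := by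
          intro u _ hu
          by_cases hlu : lvl u.1 = lvl (n - 2)
          · exfalso
            apply hu
            have : u.1 = n - 2 ∨ u.1 = n - 1 := by
              unfold lvl at hlu
              omega
            rw [Finset.mem_insert, Finset.mem_singleton]
            rcases this with h | h
            · exact Or.inl (Subtype.ext h)
            · exact Or.inr (Subtype.ext h)
          · rw [Ppath_ne _ _ hlu, zero_mul]
        rw [← Finset.sum_subset (Finset.subset_univ _) hout, Finset.sum_pair hne]
        have hlt1 : n - 2 < n := by omega
        have hlt2 : n - 1 < n := by omega
        have hv1 : Ppath (restNet Gex k) (lvl (n - 2)) ⟨n - 2, h1m⟩ = (2 : ℝ)⁻¹ := by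
          rw [ih (n - 2) hlt1 h1m, if_neg (show ¬ (n - 2) % 3 = 0 by omega)]
        have hv2 : Ppath (restNet Gex k) (lvl (n - 2)) ⟨n - 1, h2m⟩ = (2 : ℝ)⁻¹ := by
          rw [← hlvl2, ih (n - 1) hlt2 h2m, if_neg (show ¬ (n - 1) % 3 = 0 by omega)]
        have hw1 : wgt (restNet Gex k) ⟨n - 2, h1m⟩ ⟨n, hn⟩ = 1 := by
          rw [wgt_eq (u := ⟨n - 2, h1m⟩) (v := ⟨n, hn⟩) hadj1 (show lvl (n - 2) < k by omega)]
          simp only [val_mk]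
          rw [if_neg (show ¬ (n - 2) % 3 = 0 by omega)]
        have hw2 : wgt (restNet Gex k) ⟨n - 1, h2m⟩ ⟨n, hn⟩ = 1 := by
          rw [wgt_eq (u := ⟨n - 1, h2m⟩) (v := ⟨n, hn⟩) hadj2
            (show lvl (n - 1) < k by rw [hlvl2]; omega)]
          simp only [val_mk]
          rw [if_neg (show ¬ (n - 1) % 3 = 0 by omega)]
        rw [hv1, hv2, hw1, hw2, if_pos h3]
        norm_num
      · -- one predecessor p with p % 3 = 0
        set p := if n % 3 = 1 then n - 1 else n - 2 with hp
        have hp3 : p % 3 = 0 := by rw [hp]; split <;> omega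
        have hadjp : Adj p n := by
          rw [hp]
          by_cases h1 : n % 3 = 1
          · rw [if_pos h1]; exact Or.inl ⟨by omega, Or.inl (by omega)⟩
          · rw [if_neg h1]; exact Or.inl ⟨by omega, Or.inr (by omega)⟩
        have hplt : p < n := by rw [hp]; split <;> omega
        have hlvlp : lvl n = lvl p + 1 := adj_lvl hadjp
        have hpm : height Gex p ≤ k := mk_mem (by omega)
        rw [hlvlp, Ppath_succ]
        have hzero : ∀ u : Sk, u ∈ Finset.univ → u ≠ ⟨p, hpm⟩ →
            Ppath (restNet Gex k) (lvl p) u * wgt (restNet Gex k) u ⟨n, hn⟩ = 0 := by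
          intro u _ hu
          by_cases hlu : lvl u.1 = lvl p
          · exfalso
            apply hu
            apply Subtype.ext
            show u.1 = p
            unfold lvl at hlu
            omega
          · rw [Ppath_ne _ _ hlu, zero_mul]
        rw [Finset.sum_eq_single_of_mem _ (Finset.mem_univ (⟨p, hpm⟩ : Sk)) hzero]
        rw [ih p hplt hpm, if_pos hp3,
          wgt_eq (u := ⟨p, hpm⟩) (v := ⟨n, hn⟩) hadjp (show lvl p < k by omega)]
        simp only [val_mk]
        rw [if_pos hp3, if_neg h3, one_mul]

lemma pvisit_val (v : Sk) :
    pvisit (restNet Gex k) v = if v.1 % 3 = 0 then 1 else (2 : ℝ)⁻¹ := by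
  obtain ⟨n, hn⟩ := v
  rw [pvisit_eq_Ppath]
  exact Ppath_val n hn

open Classical in
lemma B2_val : B2 (restNet Gex k) = if Odd k then 1 else 0 := by
  classical
  rcases Nat.even_or_odd k with he | ho
  · -- even k: single leaf 3*(k/2)
    obtain ⟨m, hm⟩ := he
    have ha : height Gex (3 * m) ≤ k := mk_mem (by unfold lvl; omega)
    have hfilter : Finset.univ.filter (fun v => IsLeaf (restNet Gex k) v) =
        ({⟨3 * m, ha⟩} : Finset Sk) := by
      ext v
      rw [Finset.mem_filter, Finset.mem_singleton]
      constructor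
      · rintro ⟨-, hleaf⟩
        rw [isLeaf_iff] at hleaf
        apply Subtype.ext
        show v.1 = 3 * m
        unfold lvl at hleaf
        omega
      · intro hv
        refine ⟨Finset.mem_univ _, ?_⟩
        rw [isLeaf_iff, hv, val_mk]
        unfold lvl
        omega
    rw [B2, hfilter, Finset.sum_singleton, pvisit_val]
    simp only [val_mk]
    rw [if_pos (by omega : 3 * m % 3 = 0)]
    rw [if_neg (show ¬ Odd k by rw [Nat.odd_iff]; omega)]
    simp
  · -- odd k: two leaves 3*(k/2)+1, 3*(k/2)+2
    obtain ⟨m, hm⟩ := ho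
    have ha : height Gex (3 * m + 1) ≤ k := mk_mem (by unfold lvl; omega)
    have hb : height Gex (3 * m + 2) ≤ k := mk_mem (by unfold lvl; omega)
    have hne : (⟨3 * m + 1, ha⟩ : Sk) ≠ ⟨3 * m + 2, hb⟩ := by
      intro hc; rw [Subtype.mk.injEq] at hc; omega
    have hfilter : Finset.univ.filter (fun v => IsLeaf (restNet Gex k) v) =
        ({⟨3 * m + 1, ha⟩, ⟨3 * m + 2, hb⟩} : Finset Sk) := by
      ext v
      rw [Finset.mem_filter, Finset.mem_insert, Finset.mem_singleton]
      constructor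
      · rintro ⟨-, hleaf⟩
        rw [isLeaf_iff] at hleaf
        have : v.1 = 3 * m + 1 ∨ v.1 = 3 * m + 2 := by
          unfold lvl at hleaf
          omega
        rcases this with h | h
        · exact Or.inl (Subtype.ext h)
        · exact Or.inr (Subtype.ext h)
      · intro hv
        refine ⟨Finset.mem_univ _, ?_⟩
        rw [isLeaf_iff]
        rcases hv with hv | hv <;> rw [hv, val_mk] <;> unfold lvl <;> omega
    rw [B2, hfilter, Finset.sum_pair hne, pvisit_val, pvisit_val]
    simp only [val_mk]
    rw [if_neg (by omega : ¬ (3 * m + 1) % 3 = 0), if_neg (by omega : ¬ (3 * m + 2) % 3 = 0)]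
    rw [if_pos (show Odd k by rw [Nat.odd_iff]; omega)]
    rw [Real.logb_inv, Real.logb_self_eq_one (by norm_num)]
    norm_num

end Rest

/-- **Theorem.** There is an infinite phylogenetic network `G` such that
`B₂([G]_k) = 1` when `k` is odd and `B₂([G]_k) = 0` when `k` is even; in particular
`(B₂([G]_k))_k` does not converge. -/
theorem exists_net_B2_restriction_oscillates :
    ∃ (V : Type) (_ : Countable V) (G : INet V), Infinite V ∧ IsPhyloNet G ∧
      ∀ (k : ℕ) [Fintype {v : V // height G v ≤ k}],
        B2 (restNet G k) = if Odd k then 1 else 0 := by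
  refine ⟨ℕ, inferInstance, Gex, inferInstance, isPhyloNet_Gex, ?_⟩
  intro k _
  exact B2_val

end GalledB2
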